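/- arXiv:1104.0755 — 4 statements merged into one kernel-verified Lean document; each statement's English description precedes it below -/
import Mathlib

section
/- Let q ∈ ℂ with 0 < |q| < 1. The Ramanujan function u(x) = A_q(x) satisfies the second-order q-difference equation q·x·u(q²x) − u(qx) + u(x) = 0 for all x ∈ ℂ. -/
open scoped BigOperators

open Filter

/-- The finite q-Pochhammer symbol `(a;q)_n`. -/
noncomputable def qPoch (q a : ℂ) (n : ℕ) : ℂ := ∏ j ∈ Finset.range n, (1 - a * q ^ j)

/-- The Ramanujan function `A_q(x)`. -/
noncomputable def ramanujanA (q x : ℂ) : ℂ := ∑' n : ℕ, q ^ (n ^ 2) * (-x) ^ n / qPoch q q n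

lemma factor_ne_zero {q : ℂ} (hq1 : ‖q‖ < 1) (n : ℕ) :
    (1 : ℂ) - q * q ^ n ≠ 0 := by
  intro h
  have h1 : q * q ^ n = 1 := by linear_combination -h
  have h2 := congrArg (‖·‖) h1
  rw [norm_mul, norm_pow, norm_one] at h2
  have hlt : ‖q‖ * ‖q‖ ^ n < 1 := by
    calc ‖q‖ * ‖q‖ ^ n = ‖q‖ ^ (n+1) := by ring
    _ < 1 := pow_lt_one₀ (norm_nonneg q) hq1 (Nat.succ_ne_zero n)
  rw [h2] at hlt
  exact lt_irrefl 1 hlt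

lemma qPoch_ne_zero {q : ℂ} (hq1 : ‖q‖ < 1) (n : ℕ) : qPoch q q n ≠ 0 := by
  unfold qPoch
  exact Finset.prod_ne_zero_iff.2 fun j _ => factor_ne_zero hq1 j

lemma term_succ {q : ℂ} (hq1 : ‖q‖ < 1) (x : ℂ) (n : ℕ) :
    q ^ ((n+1) ^ 2) * (-x) ^ (n+1) / qPoch q q (n+1)
      = (q ^ (n ^ 2) * (-x) ^ n / qPoch q q n) * ((-x) * (q * (q^2) ^ n) / (1 - q * q ^ n)) := by
  have h2 : (n+1)^2 = n^2 + (2*n+1) := by ring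
  rw [qPoch, Finset.prod_range_succ, ← qPoch, h2, pow_add]
  have hP := qPoch_ne_zero hq1 n
  have hf := factor_ne_zero hq1 n
  field_simp
  ring

lemma ramanujan_summable {q : ℂ} (hq1 : ‖q‖ < 1) (x : ℂ) :
    Summable (fun n : ℕ => q ^ (n ^ 2) * (-x) ^ n / qPoch q q n) := by
  apply summable_of_ratio_norm_eventually_le (r := 1/2) (by norm_num)
  have hq2 : ‖q ^ 2‖ < 1 := by
    rw [norm_pow]
    exact pow_lt_one₀ (norm_nonneg q) hq1 two_ne_zero
  have hq : ‖q‖ < 1 := by exact hq1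
  have hnum : Tendsto (fun n : ℕ => (-x) * (q * (q^2) ^ n)) atTop (nhds 0) := by
    have := (tendsto_pow_atTop_nhds_zero_of_norm_lt_one hq2).const_mul ((-x) * q)
    simpa [mul_assoc] using this
  have hden : Tendsto (fun n : ℕ => (1 : ℂ) - q * q ^ n) atTop (nhds 1) := by
    have := (tendsto_pow_atTop_nhds_zero_of_norm_lt_one hq).const_mul q
    have h := tendsto_const_nhds.sub (f := fun _ : ℕ => (1:ℂ)) this
    simpa using h
  have hrat : Tendsto (fun n : ℕ => (-x) * (q * (q^2) ^ n) / (1 - q * q ^ n)) atTop (nhds 0) := by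
    simpa [Pi.div_def] using hnum.div hden one_ne_zero
  have hev : ∀ᶠ n in atTop, ‖(-x) * (q * (q^2) ^ n) / (1 - q * q ^ n)‖ ≤ 1/2 := by
    have := hrat.norm
    simp only [norm_zero] at this
    exact this.eventually_le_const (by norm_num)
  filter_upwards [hev] with n hn
  rw [term_succ hq1 x n, norm_mul]
  calc ‖q ^ (n^2) * (-x) ^ n / qPoch q q n‖ * ‖(-x) * (q * (q^2) ^ n) / (1 - q * q ^ n)‖
      ≤ ‖q ^ (n^2) * (-x) ^ n / qPoch q q n‖ * (1/2) :=
        mul_le_mul_of_nonneg_left hn (norm_nonneg _)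
    _ = 1/2 * ‖q ^ (n^2) * (-x) ^ n / qPoch q q n‖ := by ring

theorem ramanujan_qDifference_equation (q : ℂ) (hq0 : 0 < ‖q‖)
    (hq1 : ‖q‖ < 1) (x : ℂ) :
    q * x * ramanujanA q (q ^ 2 * x) - ramanujanA q (q * x) + ramanujanA q x = 0 := by
  have hs1 := ramanujan_summable hq1 x
  have hs2 := ramanujan_summable hq1 (q * x)
  have hs3 := ramanujan_summable hq1 (q ^ 2 * x)
  have hg : Summable (fun n : ℕ =>
      q ^ (n ^ 2) * (-x) ^ n / qPoch q q n - q ^ (n ^ 2) * (-(q * x)) ^ n / qPoch q q n) :=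
    hs1.sub hs2
  have key : ∀ n : ℕ,
      q ^ ((n+1) ^ 2) * (-x) ^ (n+1) / qPoch q q (n+1)
        - q ^ ((n+1) ^ 2) * (-(q * x)) ^ (n+1) / qPoch q q (n+1)
      = -(q * x) * (q ^ (n ^ 2) * (-(q ^ 2 * x)) ^ n / qPoch q q n) := by
    intro n
    have h2 : (n+1)^2 = n^2 + (2*n+1) := by ring
    rw [qPoch, Finset.prod_range_succ, ← qPoch, h2, pow_add]
    have hP := qPoch_ne_zero hq1 n
    have hf := factor_ne_zero hq1 n
    have e1 : (-(q * x)) ^ (n+1) = q ^ (n+1) * (-x) ^ (n+1) := by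
      rw [show -(q * x) = q * (-x) by ring, mul_pow]
    have e2 : (-(q ^ 2 * x)) ^ n = (q^2) ^ n * (-x) ^ n := by
      rw [show -(q ^ 2 * x) = q ^ 2 * (-x) by ring, mul_pow]
    rw [e1, e2]
    field_simp
    ring
  have hsum : ramanujanA q x - ramanujanA q (q * x) = -(q * x) * ramanujanA q (q ^ 2 * x) := by
    unfold ramanujanA
    rw [← Summable.tsum_sub hs1 hs2]
    rw [Summable.tsum_eq_zero_add hg]
    simp only [key]
    rw [tsum_mul_left]
    simp [qPoch]
  linear_combination hsum
end

section
/- Let q be a real number with 0 < q < 1. For every real x > 0, the function u(x) = exp(πi · log x / log q) · Ai_q(-x) satisfies the q-difference equation u(q²x) + x·u(qx) − u(x) = 0; that is, exp(πi·log(q²x)/log q)·Ai_q(-q²x) + x·exp(πi·log(qx)/log q)·Ai_q(-qx) − exp(πi·log x/log q)·Ai_q(-x) = 0. -/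
open scoped BigOperators

/-- The q-Airy function `Ai_q(x)`. -/
noncomputable def qAiry (q x : ℂ) : ℂ :=
  ∑' n : ℕ, (-1) ^ n * q ^ (n * (n - 1) / 2) * (-x) ^ n / (qPoch q (-q) n * qPoch q q n)

noncomputable def qAiryTerm (q y : ℂ) (n : ℕ) : ℂ :=
  (-1) ^ n * q ^ (n * (n - 1) / 2) * (-y) ^ n / (qPoch q (-q) n * qPoch q q n)

lemma qAiry_eq_tsum (q y : ℂ) : qAiry q y = ∑' n, qAiryTerm q y n := rfl

lemma qAiryTerm_zero (q y : ℂ) : qAiryTerm q y 0 = 1 := by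
  simp [qAiryTerm, qPoch]

lemma qAiryTerm_scale (q t y : ℂ) (n : ℕ) :
    qAiryTerm q (-(t * y)) n = t ^ n * qAiryTerm q (-y) n := by
  simp only [qAiryTerm, neg_neg, mul_pow]
  ring

lemma qAiryTerm_succ (q y : ℂ) (n : ℕ) :
    qAiryTerm q y (n + 1) =
      y * q ^ n / ((1 + q * q ^ n) * (1 - q * q ^ n)) * qAiryTerm q y n := by
  have he : (n + 1) * n / 2 = n * (n - 1) / 2 + n := by
    rcases n with _ | m
    · simp
    · have h2 : (2:ℕ) ∣ (m + 1) * m := by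
        rw [mul_comm]; exact (Nat.even_mul_succ_self m).two_dvd
      have h3 : (m + 1 + 1) * (m + 1) = (m + 1) * m + 2 * (m + 1) := by ring
      simp only [Nat.add_sub_cancel]
      omega
  simp only [qAiryTerm, qPoch, Finset.prod_range_succ, Nat.add_sub_cancel, he, pow_add,
    pow_succ]
  rw [div_mul_div_comm]
  congr 1 <;> ring

lemma one_add_ne (q : ℝ) (hq0 : 0 < q) (n : ℕ) : (1 + (q : ℂ) * (q : ℂ) ^ n) ≠ 0 := by
  have h : ((1 + q * q ^ n : ℝ) : ℂ) = 1 + (q : ℂ) * (q : ℂ) ^ n := by push_cast; ring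
  rw [← h]
  exact_mod_cast ne_of_gt (by positivity)

lemma one_sub_ne (q : ℝ) (hq0 : 0 < q) (hq1 : q < 1) (n : ℕ) :
    (1 - (q : ℂ) * (q : ℂ) ^ n) ≠ 0 := by
  have h : ((1 - q * q ^ n : ℝ) : ℂ) = 1 - (q : ℂ) * (q : ℂ) ^ n := by push_cast; ring
  rw [← h]
  have h2 : q * q ^ n < 1 := by
    have : q ^ (n + 1) < 1 := pow_lt_one₀ hq0.le hq1 (Nat.succ_ne_zero n)
    rw [pow_succ'] at this; exact this
  exact_mod_cast ne_of_gt (by linarith)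

lemma qAiryTerm_step (q : ℝ) (hq0 : 0 < q) (hq1 : q < 1) (y : ℂ) (n : ℕ) :
    qAiryTerm (q : ℂ) (-((q : ℂ) ^ 2 * y)) (n + 1) - qAiryTerm (q : ℂ) (-y) (n + 1)
      = y * qAiryTerm (q : ℂ) (-((q : ℂ) * y)) n := by
  have hp := one_add_ne q hq0 n
  have hm := one_sub_ne q hq0 hq1 n
  rw [qAiryTerm_scale, qAiryTerm_scale, qAiryTerm_succ]
  set c := qAiryTerm (q : ℂ) (-y) n with hc
  have hsq : ((q : ℂ) ^ 2) ^ (n + 1) = ((q : ℂ) * (q : ℂ) ^ n) ^ 2 := by ring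
  rw [hsq]
  field_simp
  ring

lemma summable_qAiryTerm (q : ℝ) (hq0 : 0 < q) (hq1 : q < 1) (y : ℂ) :
    Summable (qAiryTerm (q : ℂ) y) := by
  apply summable_of_ratio_norm_eventually_le (r := 1 / 2) (by norm_num)
  have h0 : Filter.Tendsto (fun n : ℕ => ‖y‖ / (1 - q) * q ^ n) Filter.atTop (nhds 0) := by
    simpa using (tendsto_pow_atTop_nhds_zero_of_lt_one hq0.le hq1).const_mul (‖y‖ / (1 - q))
  have h1 : ∀ᶠ n in Filter.atTop, ‖y‖ / (1 - q) * q ^ n ≤ 1 / 2 := by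
    filter_upwards [h0.eventually (ge_mem_nhds (show (0:ℝ) < 1/2 by norm_num))] with n hn
    exact hn
  filter_upwards [h1] with n hn
  rw [qAiryTerm_succ, norm_mul]
  have hD : ((1 : ℂ) + (q : ℂ) * (q : ℂ) ^ n) * (1 - (q : ℂ) * (q : ℂ) ^ n)
      = (((1 + q * q ^ n) * (1 - q * q ^ n) : ℝ) : ℂ) := by push_cast; ring
  have hqn1 : q * q ^ n < 1 := by
    have : q ^ (n + 1) < 1 := pow_lt_one₀ hq0.le hq1 (Nat.succ_ne_zero n)
    rw [pow_succ'] at this; exact this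
  have hqnq : q * q ^ n ≤ q := by
    have hle : q ^ n ≤ 1 := pow_le_one₀ hq0.le hq1.le
    nlinarith
  have hqn0 : (0:ℝ) ≤ q * q ^ n := by positivity
  have hDpos : (0 : ℝ) < (1 + q * q ^ n) * (1 - q * q ^ n) := by nlinarith
  have hDge : 1 - q ≤ (1 + q * q ^ n) * (1 - q * q ^ n) := by nlinarith
  have hnorm : ‖y * (q : ℂ) ^ n / ((1 + (q : ℂ) * (q : ℂ) ^ n) * (1 - (q : ℂ) * (q : ℂ) ^ n))‖
      ≤ 1 / 2 := by
    rw [hD, norm_div, norm_mul]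
    have h3 : ‖(((1 + q * q ^ n) * (1 - q * q ^ n) : ℝ) : ℂ)‖
        = (1 + q * q ^ n) * (1 - q * q ^ n) := by
      rw [Complex.norm_real, Real.norm_eq_abs, abs_of_pos hDpos]
    have h4 : ‖(q : ℂ) ^ n‖ = q ^ n := by
      rw [norm_pow, Complex.norm_real, Real.norm_eq_abs, abs_of_pos hq0]
    rw [h3, h4]
    have hq1' : (0:ℝ) < 1 - q := by linarith
    have key : ‖y‖ * q ^ n / ((1 + q * q ^ n) * (1 - q * q ^ n)) ≤ ‖y‖ * q ^ n / (1 - q) :=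
      div_le_div_of_nonneg_left (by positivity) hq1' hDge
    calc ‖y‖ * q ^ n / ((1 + q * q ^ n) * (1 - q * q ^ n))
        ≤ ‖y‖ * q ^ n / (1 - q) := key
      _ = ‖y‖ / (1 - q) * q ^ n := by ring
      _ ≤ 1 / 2 := hn
  calc ‖y * (q : ℂ) ^ n / ((1 + (q : ℂ) * (q : ℂ) ^ n) * (1 - (q : ℂ) * (q : ℂ) ^ n))‖
        * ‖qAiryTerm (q : ℂ) y n‖
      ≤ 1 / 2 * ‖qAiryTerm (q : ℂ) y n‖ :=
        mul_le_mul_of_nonneg_right hnorm (norm_nonneg _)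

lemma qAiry_key (q : ℝ) (hq0 : 0 < q) (hq1 : q < 1) (y : ℂ) :
    qAiry (q : ℂ) (-((q : ℂ) ^ 2 * y)) - y * qAiry (q : ℂ) (-((q : ℂ) * y))
      - qAiry (q : ℂ) (-y) = 0 := by
  have hA := summable_qAiryTerm q hq0 hq1 (-((q : ℂ) ^ 2 * y))
  have hB := summable_qAiryTerm q hq0 hq1 (-((q : ℂ) * y))
  have hC := summable_qAiryTerm q hq0 hq1 (-y)
  have hsub : Summable (fun n => qAiryTerm (q : ℂ) (-((q : ℂ) ^ 2 * y)) n
      - qAiryTerm (q : ℂ) (-y) n) := hA.sub hC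
  rw [qAiry_eq_tsum, qAiry_eq_tsum, qAiry_eq_tsum]
  have e1 : (∑' n, qAiryTerm (q : ℂ) (-((q : ℂ) ^ 2 * y)) n)
      - (∑' n, qAiryTerm (q : ℂ) (-y) n)
      = ∑' n, (qAiryTerm (q : ℂ) (-((q : ℂ) ^ 2 * y)) n - qAiryTerm (q : ℂ) (-y) n) :=
    (hA.tsum_sub hC).symm
  have e2 : ∑' n, (qAiryTerm (q : ℂ) (-((q : ℂ) ^ 2 * y)) n - qAiryTerm (q : ℂ) (-y) n)
      = ∑' n, (qAiryTerm (q : ℂ) (-((q : ℂ) ^ 2 * y)) (n + 1)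
          - qAiryTerm (q : ℂ) (-y) (n + 1)) := by
    rw [hsub.tsum_eq_zero_add]
    simp [qAiryTerm_zero]
  have e3 : ∑' n, (qAiryTerm (q : ℂ) (-((q : ℂ) ^ 2 * y)) (n + 1)
        - qAiryTerm (q : ℂ) (-y) (n + 1))
      = ∑' n, y * qAiryTerm (q : ℂ) (-((q : ℂ) * y)) n :=
    tsum_congr fun n => qAiryTerm_step q hq0 hq1 y n
  have e4 : ∑' n, y * qAiryTerm (q : ℂ) (-((q : ℂ) * y)) n
      = y * ∑' n, qAiryTerm (q : ℂ) (-((q : ℂ) * y)) n := tsum_mul_left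
  have := e1.trans (e2.trans (e3.trans e4))
  linear_combination this

theorem qAiry_second_solution (q : ℝ) (hq0 : 0 < q) (hq1 : q < 1) (x : ℝ) (hx : 0 < x) :
    Complex.exp (Real.pi * Complex.I * Real.log (q ^ 2 * x) / Real.log q) *
        qAiry (q : ℂ) (-(q ^ 2 * x : ℝ)) +
      (x : ℂ) * (Complex.exp (Real.pi * Complex.I * Real.log (q * x) / Real.log q) *
        qAiry (q : ℂ) (-(q * x : ℝ))) -
      Complex.exp (Real.pi * Complex.I * Real.log x / Real.log q) * qAiry (q : ℂ) (-x : ℝ) = 0 := by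
  have hlq : Real.log q ≠ 0 := (Real.log_neg hq0 hq1).ne
  have hlqC : ((Real.log q : ℝ) : ℂ) ≠ 0 := by exact_mod_cast hlq
  have hl2 : Real.log (q ^ 2 * x) = 2 * Real.log q + Real.log x := by
    rw [Real.log_mul (pow_ne_zero 2 hq0.ne') hx.ne', Real.log_pow]
    push_cast; ring
  have hl1 : Real.log (q * x) = Real.log q + Real.log x := Real.log_mul hq0.ne' hx.ne'
  have hE2 : Complex.exp (Real.pi * Complex.I * Real.log (q ^ 2 * x) / Real.log q)
      = Complex.exp (Real.pi * Complex.I * Real.log x / Real.log q) := by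
    rw [hl2]
    have harg : (Real.pi : ℂ) * Complex.I * ((2 * Real.log q + Real.log x : ℝ) : ℂ)
        / (Real.log q : ℂ)
        = 2 * Real.pi * Complex.I + Real.pi * Complex.I * Real.log x / Real.log q := by
      push_cast
      field_simp
    rw [harg, Complex.exp_add, Complex.exp_two_pi_mul_I, one_mul]
  have hE1 : Complex.exp (Real.pi * Complex.I * Real.log (q * x) / Real.log q)
      = -Complex.exp (Real.pi * Complex.I * Real.log x / Real.log q) := by
    rw [hl1]
    have harg : (Real.pi : ℂ) * Complex.I * ((Real.log q + Real.log x : ℝ) : ℂ)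
        / (Real.log q : ℂ)
        = Real.pi * Complex.I + Real.pi * Complex.I * Real.log x / Real.log q := by
      push_cast
      field_simp
    rw [harg, Complex.exp_add, Complex.exp_pi_mul_I]
    ring
  rw [hE2, hE1]
  push_cast
  have key := qAiry_key q hq0 hq1 (x : ℂ)
  linear_combination Complex.exp (Real.pi * Complex.I * Real.log x / Real.log q) * key
end

section
/- Let q ∈ ℂ with 0 < |q| < 1, and let f(t) = ∑_{n≥0} a_n t^n be a power series with coefficients a_n ∈ ℂ such that the q-Borel transform g(τ) = ∑_{n≥0} a_n q^{-n(n-1)/2} τ^n converges for all τ ∈ ℂ (in particular f is entire). Then for every r > 0 and every t ∈ ℂ, the q-Laplace transform of g recovers f: (1/(2πi)) ∮_{|τ|=r} g(τ) · θ_q(t/τ) · dτ/τ = f(t), where the integral is taken counterclockwise over the circle of radius r centered at the origin. -/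
open Metric MeasureTheory Filter

/-- cast of the triangular exponent -/
lemma castE (n : ℕ) : ((n * (n - 1) / 2 : ℕ) : ℤ) = (n : ℤ) * ((n : ℤ) - 1) / 2 := by
  rcases n with _ | k
  · simp
  · rw [Int.natCast_div]
    push_cast [Nat.succ_sub_one]
    ring_nf

/-- norm-summability at a smaller radius from summability at a bigger one -/
lemma aux_summable_norm {c : ℕ → ℂ} {r : ℝ} (hr : 0 < r)
    (hs : Summable fun n => c n * ((2 * r : ℝ) : ℂ) ^ n) :
    Summable fun n => ‖c n‖ * r ^ n := by
  have h0 : Filter.Tendsto (fun n => ‖c n * ((2 * r : ℝ) : ℂ) ^ n‖) atTop (nhds 0) := by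
    simpa using hs.tendsto_atTop_zero.norm
  obtain ⟨B, hB⟩ := h0.bddAbove_range
  have hB' : ∀ n, ‖c n‖ * (2 * r) ^ n ≤ B := by
    intro n
    have := hB (Set.mem_range_self (f := fun n => ‖c n * ((2 * r : ℝ) : ℂ) ^ n‖) n)
    simpa [norm_mul, norm_pow, abs_of_pos hr] using this
  have hgeo : Summable (fun n : ℕ => B * (1/2) ^ n) :=
    (summable_geometric_of_lt_one (by norm_num) (by norm_num)).mul_left B
  refine Summable.of_nonneg_of_le (fun n => by positivity) (fun n => ?_) hgeo
  have key : ‖c n‖ * r ^ n = (‖c n‖ * (2 * r) ^ n) * (1/2) ^ n := by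
    rw [mul_assoc, ← mul_pow]
    ring_nf
  rw [key]
  have hp : (0:ℝ) ≤ (1/2:ℝ) ^ n := by positivity
  exact mul_le_mul_of_nonneg_right (hB' n) hp

/-- summability of the theta-type series over ℤ -/
lemma aux_theta_summable {Q s : ℝ} (hQ0 : 0 < Q) (hQ1 : Q < 1) (hs : 0 ≤ s) :
    Summable fun m : ℤ => Q ^ (m * (m - 1) / 2) * s ^ m := by
  have hQne : Q ≠ 0 := hQ0.ne'
  have he : ∀ k : ℤ, (k + 1) * (k + 1 - 1) / 2 = k * (k - 1) / 2 + k := by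
    intro k
    have h : (k + 1) * (k + 1 - 1) = k * (k - 1) + k * 2 := by ring
    rw [h, Int.add_mul_ediv_right _ _ (by norm_num : (2:ℤ) ≠ 0)]
  have hnonneg : ∀ m : ℤ, 0 ≤ Q ^ (m * (m - 1) / 2) * s ^ m := by
    intro m
    have h1 : (0:ℝ) < Q ^ (m * (m - 1) / 2) := zpow_pos hQ0 _
    have h2 : (0:ℝ) ≤ s ^ m := zpow_nonneg hs _
    positivity
  apply Summable.of_nat_of_neg
  · -- positive side
    have hten : Filter.Tendsto (fun k : ℕ => Q ^ k * s) Filter.atTop (nhds 0) := by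
      simpa using (tendsto_pow_atTop_nhds_zero_of_lt_one hQ0.le hQ1).mul_const s
    have hev : ∀ᶠ k : ℕ in Filter.atTop, Q ^ k * s ≤ 1/2 :=
      (hten.eventually_lt_const (by norm_num)).mono fun k hk => hk.le
    refine summable_of_ratio_norm_eventually_le (r := 1/2) (by norm_num) ?_
    filter_upwards [hev] with k hk
    have key : Q ^ (((k:ℤ) + 1) * ((k:ℤ) + 1 - 1) / 2) * s ^ ((k:ℤ) + 1)
        = (Q ^ ((k:ℤ) * ((k:ℤ) - 1) / 2) * s ^ (k:ℤ)) * (Q ^ k * s) := by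
      rw [he, zpow_add₀ hQne]
      rw [show ((k:ℤ) + 1) = ((k + 1 : ℕ) : ℤ) by push_cast; ring]
      rw [zpow_natCast, zpow_natCast, zpow_natCast, pow_succ]
      ring
    have hk0 : 0 ≤ Q ^ ((k:ℤ) * ((k:ℤ) - 1) / 2) * s ^ (k:ℤ) := hnonneg k
    have hk1 : 0 ≤ Q ^ (((k:ℤ) + 1) * ((k:ℤ) + 1 - 1) / 2) * s ^ ((k:ℤ) + 1) := by
      have := hnonneg ((k:ℤ) + 1); simpa using this
    rw [Real.norm_eq_abs, Real.norm_eq_abs, abs_of_nonneg hk0]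
    push_cast
    rw [abs_of_nonneg (by push_cast at hk1 ⊢; exact hk1)]
    calc Q ^ (((k:ℤ) + 1) * ((k:ℤ) + 1 - 1) / 2) * s ^ ((k:ℤ) + 1)
        = (Q ^ ((k:ℤ) * ((k:ℤ) - 1) / 2) * s ^ (k:ℤ)) * (Q ^ k * s) := key
      _ ≤ (Q ^ ((k:ℤ) * ((k:ℤ) - 1) / 2) * s ^ (k:ℤ)) * (1/2) :=
          mul_le_mul_of_nonneg_left hk hk0
      _ = 1/2 * (Q ^ ((k:ℤ) * ((k:ℤ) - 1) / 2) * s ^ (k:ℤ)) := by ring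
  · -- negative side
    have hen : ∀ k : ℤ, (-(k + 1)) * (-(k + 1) - 1) / 2 = (-k) * (-k - 1) / 2 + (k + 1) := by
      intro k
      have h : (-(k + 1)) * (-(k + 1) - 1) = (-k) * (-k - 1) + (k + 1) * 2 := by ring
      rw [h, Int.add_mul_ediv_right _ _ (by norm_num : (2:ℤ) ≠ 0)]
    have hten : Filter.Tendsto (fun k : ℕ => Q ^ (k + 1) * s⁻¹) Filter.atTop (nhds 0) := by
      have : Filter.Tendsto (fun k : ℕ => Q ^ (k+1)) Filter.atTop (nhds 0) :=
        (tendsto_pow_atTop_nhds_zero_of_lt_one hQ0.le hQ1).comp (Filter.tendsto_add_atTop_nat 1)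
      simpa using this.mul_const s⁻¹
    have hev : ∀ᶠ k : ℕ in Filter.atTop, Q ^ (k + 1) * s⁻¹ ≤ 1/2 :=
      (hten.eventually_lt_const (by norm_num)).mono fun k hk => hk.le
    refine summable_of_ratio_norm_eventually_le (r := 1/2) (by norm_num) ?_
    filter_upwards [hev] with k hk
    have key : Q ^ ((-((k:ℤ) + 1)) * (-((k:ℤ) + 1) - 1) / 2) * s ^ (-((k:ℤ) + 1))
        = (Q ^ ((-(k:ℤ)) * (-(k:ℤ) - 1) / 2) * s ^ (-(k:ℤ))) * (Q ^ (k + 1) * s⁻¹) := by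
      rw [hen, zpow_add₀ hQne, zpow_neg, zpow_neg]
      rw [show ((k:ℤ) + 1) = ((k + 1 : ℕ) : ℤ) by push_cast; ring]
      rw [zpow_natCast, zpow_natCast, zpow_natCast]
      simp only [pow_succ, mul_inv]
      ring
    have hk0 : 0 ≤ Q ^ ((-(k:ℤ)) * (-(k:ℤ) - 1) / 2) * s ^ (-(k:ℤ)) := hnonneg (-(k:ℤ))
    have hk1 : 0 ≤ Q ^ ((-((k:ℤ) + 1)) * (-((k:ℤ) + 1) - 1) / 2) * s ^ (-((k:ℤ) + 1)) :=
      hnonneg (-((k:ℤ) + 1))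
    rw [Real.norm_eq_abs, Real.norm_eq_abs, abs_of_nonneg hk0]
    push_cast
    rw [abs_of_nonneg (by push_cast at hk1 ⊢; exact hk1)]
    calc Q ^ ((-((k:ℤ) + 1)) * (-((k:ℤ) + 1) - 1) / 2) * s ^ (-((k:ℤ) + 1))
        = (Q ^ ((-(k:ℤ)) * (-(k:ℤ) - 1) / 2) * s ^ (-(k:ℤ))) * (Q ^ (k + 1) * s⁻¹) := key
      _ ≤ (Q ^ ((-(k:ℤ)) * (-(k:ℤ) - 1) / 2) * s ^ (-(k:ℤ))) * (1/2) :=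
          mul_le_mul_of_nonneg_left hk hk0
      _ = 1/2 * (Q ^ ((-(k:ℤ)) * (-(k:ℤ) - 1) / 2) * s ^ (-(k:ℤ))) := by ring

/-- interchange of circle integral and tsum under a summable uniform bound -/
lemma circleIntegral_tsum {ι : Type} [Countable ι] (F : ι → ℂ → ℂ) {r : ℝ} (hr : 0 < r)
    (hFc : ∀ i, ContinuousOn (F i) (Metric.sphere (0:ℂ) r))
    (M : ι → ℝ) (hM : ∀ i, ∀ τ ∈ Metric.sphere (0:ℂ) r, ‖F i τ‖ ≤ M i)
    (hMs : Summable M) :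
    (∮ τ in C(0, r), ∑' i, F i τ) = ∑' i, ∮ τ in C(0, r), F i τ := by
  have h2π : (0:ℝ) ≤ 2 * Real.pi := by positivity
  have hnorm : ∀ i (θ : ℝ), ‖circleMap 0 r θ * Complex.I * F i (circleMap 0 r θ)‖
      = r * ‖F i (circleMap 0 r θ)‖ := by
    intro i θ
    rw [norm_mul, norm_mul, norm_circleMap_zero,
      Complex.norm_I, abs_of_pos hr, mul_one]
  have hmem : ∀ θ : ℝ, circleMap 0 r θ ∈ Metric.sphere (0:ℂ) r :=
    circleMap_mem_sphere 0 hr.le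
  have hcont : ∀ i, Continuous fun θ : ℝ => circleMap 0 r θ * Complex.I * F i (circleMap 0 r θ) :=
    fun i => ((continuous_circleMap 0 r).mul continuous_const).mul
      ((hFc i).comp_continuous (continuous_circleMap 0 r) hmem)
  simp only [circleIntegral, deriv_circleMap, smul_eq_mul,
    intervalIntegral.integral_of_le h2π]
  rw [show (fun θ : ℝ => circleMap 0 r θ * Complex.I * ∑' i, F i (circleMap 0 r θ))
      = fun θ : ℝ => ∑' i, circleMap 0 r θ * Complex.I * F i (circleMap 0 r θ) by
    funext θ; exact (tsum_mul_left).symm]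
  rw [MeasureTheory.integral_tsum (fun i => ((hcont i).aestronglyMeasurable).restrict) ?_]
  have hbound : ∀ i, (∫⁻ θ in Set.Ioc 0 (2 * Real.pi),
      ‖circleMap 0 r θ * Complex.I * F i (circleMap 0 r θ)‖₊)
      ≤ ENNReal.ofReal (2 * Real.pi) * ENNReal.ofReal (r * M i) := by
    intro i
    have hle : ∀ θ : ℝ, (‖circleMap 0 r θ * Complex.I * F i (circleMap 0 r θ)‖₊ : ENNReal)
        ≤ ENNReal.ofReal (r * M i) := by
      intro θ
      rw [← enorm_eq_nnnorm, ← ofReal_norm, hnorm i θ]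
      exact ENNReal.ofReal_le_ofReal
        (mul_le_mul_of_nonneg_left (hM i _ (hmem θ)) hr.le)
    calc (∫⁻ θ in Set.Ioc 0 (2 * Real.pi),
          ‖circleMap 0 r θ * Complex.I * F i (circleMap 0 r θ)‖₊)
        ≤ ∫⁻ _ in Set.Ioc 0 (2 * Real.pi), ENNReal.ofReal (r * M i) :=
          MeasureTheory.lintegral_mono fun θ => hle θ
      _ = ENNReal.ofReal (r * M i) * MeasureTheory.volume (Set.Ioc (0:ℝ) (2 * Real.pi)) := by
          rw [MeasureTheory.setLIntegral_const]
      _ = ENNReal.ofReal (2 * Real.pi) * ENNReal.ofReal (r * M i) := by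
          rw [Real.volume_Ioc, sub_zero, mul_comm]
  have hMnn : ∀ i, 0 ≤ M i :=
    fun i => le_trans (norm_nonneg _) (hM i _ (hmem 0))
  have hsum2 : (∑' i, ENNReal.ofReal (r * M i)) = ENNReal.ofReal (∑' i, r * M i) :=
    (ENNReal.ofReal_tsum_of_nonneg (fun i => mul_nonneg hr.le (hMnn i)) (hMs.mul_left r)).symm
  refine ne_top_of_le_ne_top
    (ENNReal.mul_ne_top (ENNReal.ofReal_ne_top (r := 2 * Real.pi))
      (ENNReal.ofReal_ne_top (r := ∑' i, r * M i))) ?_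
  calc (∑' i, ∫⁻ θ in Set.Ioc 0 (2 * Real.pi),
        ‖circleMap 0 r θ * Complex.I * F i (circleMap 0 r θ)‖₊)
      ≤ ∑' i, ENNReal.ofReal (2 * Real.pi) * ENNReal.ofReal (r * M i) :=
        ENNReal.tsum_le_tsum hbound
    _ = ENNReal.ofReal (2 * Real.pi) * ENNReal.ofReal (∑' i, r * M i) := by
        rw [ENNReal.tsum_mul_left, hsum2]

/-- integral of a monomial over a circle -/
lemma circleIntegral_zpow {r : ℝ} (hr : 0 < r) (k : ℤ) :
    (∮ z in C(0, r), z ^ k) = if k = -1 then 2 * Real.pi * Complex.I else 0 := by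
  split_ifs with h
  · subst h
    have h0 : (0:ℂ) ∈ Metric.ball (0:ℂ) r := by simpa using hr
    have := circleIntegral.integral_sub_inv_of_mem_ball h0
    simpa [zpow_neg_one] using this
  · have := circleIntegral.integral_sub_zpow_of_ne h 0 0 r
    simpa using this

open scoped BigOperators

/-- The Jacobi theta function `θ_q(x)`. -/
noncomputable def jTheta (q x : ℂ) : ℂ := ∑' n : ℤ, q ^ (n * (n - 1) / 2) * x ^ n

/-- The q-Laplace transform inverts the q-Borel transform on entire functions. -/
theorem qLaplace_qBorel_eq_id (q : ℂ) (hq0 : 0 < ‖q‖) (hq1 : ‖q‖ < 1)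
    (a : ℕ → ℂ)
    (hg : ∀ τ : ℂ, Summable fun n : ℕ => a n * q ^ (-(n * (n - 1) / 2 : ℕ) : ℤ) * τ ^ n)
    (r : ℝ) (hr : 0 < r) (t : ℂ) :
    (1 / (2 * Real.pi * Complex.I)) *
        (∮ τ in C(0, r),
          (∑' n : ℕ, a n * q ^ (-(n * (n - 1) / 2 : ℕ) : ℤ) * τ ^ n) * jTheta q (t / τ) / τ) =
      ∑' n : ℕ, a n * t ^ n := by
  have hq : q ≠ 0 := by
    intro h; rw [h] at hq0; simp at hq0
  have hQ0 : (0:ℝ) < ‖q‖ := by simpa using hq0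
  have hQ1 : ‖q‖ < 1 := by simpa using hq1
  set c : ℕ → ℂ := fun n => a n * q ^ (-(n * (n - 1) / 2 : ℕ) : ℤ) with hc
  set d : ℤ → ℂ := fun m => q ^ (m * (m - 1) / 2) with hd
  set F : ℕ × ℤ → ℂ → ℂ :=
    fun p τ => c p.1 * d p.2 * t ^ p.2 * τ ^ ((p.1 : ℤ) - p.2 - 1) with hF
  set M : ℕ × ℤ → ℝ :=
    fun p => (‖c p.1‖ * r ^ p.1) * (‖d p.2‖ * (‖t‖ / r) ^ p.2) * r⁻¹ with hM
  -- summability facts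
  have Sg : Summable fun n => ‖c n‖ * r ^ n := aux_summable_norm hr (hg _)
  have Sθ : Summable fun m : ℤ => ‖d m‖ * (‖t‖ / r) ^ m := by
    have h := aux_theta_summable hQ0 hQ1 (s := ‖t‖ / r) (by positivity)
    refine h.congr fun m => ?_
    rw [hd]; rw [norm_zpow]
  have SM : Summable M :=
    (Sg.mul_of_nonneg Sθ (fun n => by positivity)
      (fun m => mul_nonneg (norm_nonneg _) (zpow_nonneg (by positivity) _))).mul_right r⁻¹
  -- norm of F on the sphere
  have hnormF : ∀ (p : ℕ × ℤ), ∀ τ ∈ Metric.sphere (0:ℂ) r, ‖F p τ‖ = M p := by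
    intro p τ hτ
    have hτn : ‖τ‖ = r := by simpa using mem_sphere_zero_iff_norm.1 hτ
    have hrpow : (r:ℝ) ^ ((p.1 : ℤ) - p.2 - 1) = r ^ (p.1 : ℕ) / r ^ p.2 / r := by
      rw [zpow_sub₀ hr.ne', zpow_sub₀ hr.ne', zpow_one, zpow_natCast]
    rw [hF, hM]
    simp only [norm_mul, norm_zpow, hτn]
    rw [hrpow, div_zpow]
    ring
  -- continuity of F on the sphere
  have hFcont : ∀ p : ℕ × ℤ, ContinuousOn (F p) (Metric.sphere (0:ℂ) r) := by
    intro p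
    refine continuousOn_const.mul ?_
    intro τ hτ
    have hτ0 : τ ≠ 0 := by
      have : ‖τ‖ = r := by simpa using mem_sphere_zero_iff_norm.1 hτ
      intro h; rw [h] at this; simp at this; exact hr.ne this
    exact (continuousAt_zpow₀ τ _ (Or.inl hτ0)).continuousWithinAt
  -- Step A: expansion of the integrand on the sphere
  have keyA : ∀ τ ∈ Metric.sphere (0:ℂ) r,
      (∑' n : ℕ, a n * q ^ (-(n * (n - 1) / 2 : ℕ) : ℤ) * τ ^ n) * jTheta q (t / τ) / τ
        = ∑' p : ℕ × ℤ, F p τ := by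
    intro τ hτ
    have hτn : ‖τ‖ = r := by simpa using mem_sphere_zero_iff_norm.1 hτ
    have hτ0 : τ ≠ 0 := by
      intro h; rw [h] at hτn; simp at hτn; exact hr.ne hτn
    have S1 : Summable fun n => ‖c n * τ ^ n‖ := by
      refine Sg.congr fun n => ?_
      simp [norm_mul, norm_pow, hτn]
    have S2 : Summable fun m : ℤ => ‖d m * (t / τ) ^ m‖ := by
      refine Sθ.congr fun m => ?_
      simp [norm_mul, norm_zpow, norm_div, hτn]
    have hjt : jTheta q (t / τ) = ∑' m : ℤ, d m * (t / τ) ^ m := rfl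
    have hg' : (∑' n : ℕ, a n * q ^ (-(n * (n - 1) / 2 : ℕ) : ℤ) * τ ^ n)
        = ∑' n : ℕ, c n * τ ^ n := rfl
    rw [hg', hjt, tsum_mul_tsum_of_summable_norm S1 S2, ← tsum_div_const]
    refine tsum_congr fun p => ?_
    have hzpow : τ ^ ((p.1 : ℤ) - p.2 - 1) = τ ^ (p.1 : ℕ) / τ ^ p.2 / τ := by
      rw [zpow_sub₀ hτ0, zpow_sub₀ hτ0, zpow_one, zpow_natCast]
    rw [hF]
    simp only
    rw [hzpow, div_zpow]
    ring
  -- Step B: interchange integral and sum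
  have hB : (∮ τ in C(0, r),
      (∑' n : ℕ, a n * q ^ (-(n * (n - 1) / 2 : ℕ) : ℤ) * τ ^ n) * jTheta q (t / τ) / τ)
      = ∑' p : ℕ × ℤ, ∮ τ in C(0, r), F p τ := by
    rw [circleIntegral.integral_congr hr.le keyA]
    exact circleIntegral_tsum F hr hFcont M
      (fun p τ hτ => le_of_eq (hnormF p τ hτ)) SM
  -- Step C: compute each monomial integral
  have hC : ∀ p : ℕ × ℤ, (∮ τ in C(0, r), F p τ)
      = c p.1 * d p.2 * t ^ p.2 *
        (if (p.1 : ℤ) - p.2 - 1 = -1 then (2 * Real.pi * Complex.I : ℂ) else 0) := by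
    intro p
    have : (∮ τ in C(0, r), F p τ)
        = ∮ τ in C(0, r), (c p.1 * d p.2 * t ^ p.2) • τ ^ ((p.1 : ℤ) - p.2 - 1) := rfl
    rw [this, circleIntegral.integral_smul, circleIntegral_zpow hr, smul_eq_mul]
  -- Step D: sum over the diagonal
  have hinj : Function.Injective (fun n : ℕ => ((n, (n : ℤ)) : ℕ × ℤ)) := by
    intro x y h
    simpa using congrArg Prod.fst h
  have hsupp : Function.support (fun p : ℕ × ℤ => c p.1 * d p.2 * t ^ p.2 *
      (if (p.1 : ℤ) - p.2 - 1 = -1 then (2 * Real.pi * Complex.I : ℂ) else 0))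
      ⊆ Set.range (fun n : ℕ => ((n, (n : ℤ)) : ℕ × ℤ)) := by
    intro p hp
    have hker := Function.mem_support.mp hp
    rcases eq_or_ne ((p.1 : ℤ) - p.2 - 1) (-1) with h | h
    · have hp2 : p.2 = (p.1 : ℤ) := by omega
      exact ⟨p.1, by simp [Prod.ext_iff, hp2.symm]⟩
    · exact absurd (by rw [if_neg h, mul_zero]) hker
  have hdiag : (∑' p : ℕ × ℤ, c p.1 * d p.2 * t ^ p.2 *
      (if (p.1 : ℤ) - p.2 - 1 = -1 then (2 * Real.pi * Complex.I : ℂ) else 0))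
      = ∑' n : ℕ, (a n * t ^ n) * (2 * Real.pi * Complex.I) := by
    rw [← hinj.tsum_eq hsupp]
    refine tsum_congr fun n => ?_
    simp only
    rw [if_pos (by ring), zpow_natCast]
    have hcd : c n * d n = a n := by
      rw [hc, hd]
      simp only
      rw [show ((n : ℤ) * ((n : ℤ) - 1) / 2) = ((n * (n - 1) / 2 : ℕ) : ℤ) from (castE n).symm]
      rw [mul_assoc, ← zpow_add₀ hq]
      simp
    rw [hcd]
  rw [hB, tsum_congr hC, hdiag, tsum_mul_right]
  have hne : (2 * Real.pi * Complex.I : ℂ) ≠ 0 := by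
    simp [Real.pi_ne_zero, Complex.I_ne_zero]
  field_simp
end

section
/- (Hahn's relation between Jackson's first and second q-Bessel functions, series form.) Let q ∈ ℂ with 0 < |q| < 1, let a ∈ ℂ be such that a q^j ≠ 1 for every integer j ≥ 1 (so (aq;q)_n ≠ 0 for all n), and let z ∈ ℂ with |z| < 1. Then ∑_{n≥0} q^{n²} a^n z^n / ( (aq;q)_n (q;q)_n ) = (z;q)_∞ · ∑_{n≥0} z^n / ( (aq;q)_n (q;q)_n ). Taking a = q^ν and z = −x²/4, this is equivalent to the identity J_ν^{(2)}(x;q) = (−x²/4;q)_∞ · J_ν^{(1)}(x;q). -/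
open scoped BigOperators

/-- The infinite q-Pochhammer symbol `(a;q)_∞`. -/
noncomputable def qPochInf (q a : ℂ) : ℂ := ∏' j : ℕ, (1 - a * q ^ j)

namespace HahnAux

open Finset Filter Complex

/-- `ee n = n(n-1)/2`, defined recursively. -/
def ee : ℕ → ℕ
  | 0 => 0
  | n + 1 => ee n + n

lemma ee_succ (n : ℕ) : ee (n + 1) = ee n + n := rfl

lemma ee_add (j r : ℕ) : ee (j + r) = ee j + ee r + j * r := by
  induction r with
  | zero => simp [ee]
  | succ r ih =>
    have : j + (r + 1) = (j + r) + 1 := by ring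
    rw [this, ee_succ, ih, ee_succ]; ring

lemma two_ee (j : ℕ) : 2 * ee j + j = j * j := by
  induction j with
  | zero => simp [ee]
  | succ j ih => rw [ee_succ]; nlinarith

lemma qPoch_zero (q a : ℂ) : qPoch q a 0 = 1 := by simp [qPoch]

lemma qPoch_succ (q a : ℂ) (n : ℕ) : qPoch q a (n + 1) = qPoch q a n * (1 - a * q ^ n) :=
  Finset.prod_range_succ _ _

lemma qPoch_split (q b : ℂ) (s t : ℕ) :
    qPoch q b (s + t) = qPoch q b s * qPoch q (b * q ^ s) t := by
  unfold qPoch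
  rw [Finset.prod_range_add]
  congr 1
  refine Finset.prod_congr rfl fun j _ => ?_
  rw [pow_add]; ring

section Q

variable {q : ℂ} (hq1 : ‖q‖ < 1)

lemma one_sub_ne {w : ℂ} (hw : ‖w‖ < 1) : (1 : ℂ) - w ≠ 0 := by
  intro h
  rw [sub_eq_zero] at h
  rw [← h] at hw
  simp at hw

include hq1 in
lemma fac_ne (m : ℕ) : (1 : ℂ) - q * q ^ m ≠ 0 := by
  apply one_sub_ne
  calc ‖q * q ^ m‖ = ‖q‖ * ‖q‖ ^ m := by
        simp [map_mul, map_pow]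
    _ ≤ ‖q‖ * 1 := by
        refine mul_le_mul_of_nonneg_left ?_ (norm_nonneg q)
        exact pow_le_one₀ (norm_nonneg q) hq1.le
    _ < 1 := by simpa using hq1

include hq1 in
lemma Pq_ne (n : ℕ) : qPoch q q n ≠ 0 := by
  unfold qPoch
  rw [Finset.prod_ne_zero_iff]
  exact fun j _ => fac_ne hq1 j

/-- q-binomial coefficient as a complex number. -/
noncomputable def qb (q : ℂ) (n k : ℕ) : ℂ :=
  if k ≤ n then qPoch q q n / (qPoch q q k * qPoch q q (n - k)) else 0

lemma qb_of_le {n k : ℕ} (h : k ≤ n) :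
    qb q n k = qPoch q q n / (qPoch q q k * qPoch q q (n - k)) := if_pos h

lemma qb_of_gt {n k : ℕ} (h : n < k) : qb q n k = 0 := if_neg (by omega)

include hq1 in
lemma qb_self (n : ℕ) : qb q n n = 1 := by
  rw [qb_of_le le_rfl, Nat.sub_self, qPoch_zero, mul_one, div_self (Pq_ne hq1 n)]

include hq1 in
lemma qb_zero (n : ℕ) : qb q n 0 = 1 := by
  rw [qb_of_le (Nat.zero_le n), Nat.sub_zero, qPoch_zero, one_mul, div_self (Pq_ne hq1 n)]

include hq1 in
lemma qb_pascal {n k : ℕ} (hk : k ≤ n) :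
    qb q (n + 1) (k + 1) = qb q n (k + 1) + q ^ (n - k) * qb q n k := by
  rcases eq_or_lt_of_le hk with rfl | hlt
  · rw [qb_self hq1, qb_of_gt (Nat.lt_succ_self k), Nat.sub_self, pow_zero, qb_self hq1]
    simp
  · have hk1 : k + 1 ≤ n := hlt
    obtain ⟨d, rfl⟩ : ∃ d, n = k + 1 + d := ⟨n - (k + 1), by omega⟩
    rw [qb_of_le (by omega : k + 1 ≤ k + 1 + d + 1), qb_of_le hk1, qb_of_le hk]
    have h1 : k + 1 + d + 1 - (k + 1) = d + 1 := by omega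
    have h2 : k + 1 + d - (k + 1) = d := by omega
    have h3 : k + 1 + d - k = d + 1 := by omega
    rw [h1, h2, h3]
    rw [qPoch_succ q q (k + 1 + d), qPoch_succ q q k, qPoch_succ q q d]
    have nz1 := Pq_ne hq1 (k + 1 + d)
    have nz2 := Pq_ne hq1 k
    have nz3 := Pq_ne hq1 d
    have nz4 := fac_ne hq1 k
    have nz5 := fac_ne hq1 d
    field_simp
    ring

include hq1 in
lemma qb_tri {j m N : ℕ} (hj : j ≤ m) (hm : m ≤ N) :
    qb q N m * qb q m j = qb q N j * qb q (N - j) (m - j) := by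
  obtain ⟨d, rfl⟩ : ∃ d, m = j + d := ⟨m - j, by omega⟩
  obtain ⟨e, rfl⟩ : ∃ e, N = j + d + e := ⟨N - (j + d), by omega⟩
  rw [qb_of_le hm, qb_of_le hj, qb_of_le (by omega : j ≤ j + d + e),
    qb_of_le (by omega : (j + d) - j ≤ (j + d + e) - j)]
  have h1 : j + d + e - (j + d) = e := by omega
  have h2 : j + d - j = d := by omega
  have h3 : j + d + e - j = d + e := by omega
  rw [h1, h2, h3]
  have h4 : (d + e) - d = e := by omega
  rw [h4]
  have e1 : qPoch q q (d + e) = qPoch q q d * qPoch q (q * q ^ d) e := qPoch_split q q d e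
  rw [e1]
  have e2 : qPoch q q (j + d + e) = qPoch q q (j + d) * qPoch q (q * q ^ (j + d)) e := by
    rw [← qPoch_split q q (j + d) e]
  have e3 : qPoch q q (j + d) = qPoch q q j * qPoch q (q * q ^ j) d := qPoch_split q q j d
  have nz1 := Pq_ne hq1 (j + d)
  have nz2 := Pq_ne hq1 j
  have nz3 := Pq_ne hq1 d
  have nz4 := Pq_ne hq1 e
  have nz5 := Pq_ne hq1 (j + d + e)
  have nz6 := Pq_ne hq1 (d + e)
  rw [e1] at nz6
  have nz7 : qPoch q (q * q ^ d) e ≠ 0 := right_ne_zero_of_mul nz6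
  field_simp

include hq1 in
lemma gauss (x : ℂ) (n : ℕ) :
    qPoch q x n = ∑ k ∈ range (n + 1), (-1 : ℂ) ^ k * q ^ ee k * qb q n k * x ^ k := by
  induction n with
  | zero => simp [qPoch_zero, qb_self hq1, ee]
  | succ n ih =>
    rw [qPoch_succ, ih]
    have expand : (∑ k ∈ range (n + 1), (-1 : ℂ) ^ k * q ^ ee k * qb q n k * x ^ k)
        * (1 - x * q ^ n)
        = (∑ k ∈ range (n + 1), (-1 : ℂ) ^ k * q ^ ee k * qb q n k * x ^ k)
          - ∑ k ∈ range (n + 1), ((-1 : ℂ) ^ k * q ^ ee k * qb q n k * q ^ n) * x ^ (k + 1) := by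
      rw [mul_sub, mul_one, Finset.sum_mul]
      congr 1
      exact Finset.sum_congr rfl fun k _ => by ring
    rw [expand]
    have ext1 : (∑ k ∈ range (n + 1), (-1 : ℂ) ^ k * q ^ ee k * qb q n k * x ^ k)
        = ∑ k ∈ range (n + 2), (-1 : ℂ) ^ k * q ^ ee k * qb q n k * x ^ k := by
      rw [Finset.sum_range_succ (n := n + 1), qb_of_gt (Nat.lt_succ_self n)]
      ring
    rw [ext1]
    rw [Finset.sum_range_succ' (fun k => (-1 : ℂ) ^ k * q ^ ee k * qb q n k * x ^ k) (n + 1)]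
    rw [Finset.sum_range_succ' (fun k => (-1 : ℂ) ^ k * q ^ ee k * qb q (n + 1) k * x ^ k) (n + 1)]
    rw [qb_zero hq1, qb_zero hq1]
    have hC : (∑ k ∈ range (n + 1),
          (-1 : ℂ) ^ (k + 1) * q ^ ee (k + 1) * qb q (n + 1) (k + 1) * x ^ (k + 1))
        = ∑ k ∈ range (n + 1),
            ((-1 : ℂ) ^ (k + 1) * q ^ ee (k + 1) * qb q n (k + 1) * x ^ (k + 1)
              - (-1 : ℂ) ^ k * q ^ ee k * qb q n k * q ^ n * x ^ (k + 1)) := by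
      refine Finset.sum_congr rfl fun k hk => ?_
      have hkn : k ≤ n := by have := Finset.mem_range.mp hk; omega
      rw [qb_pascal hq1 hkn]
      have hpow : q ^ ee (k + 1) * q ^ (n - k) = q ^ ee k * q ^ n := by
        rw [← pow_add, ← pow_add]
        congr 1
        rw [ee_succ]
        omega
      have hsg : (-1 : ℂ) ^ (k + 1) = -(-1 : ℂ) ^ k := by rw [pow_succ]; ring
      calc (-1 : ℂ) ^ (k + 1) * q ^ ee (k + 1) * (qb q n (k + 1) + q ^ (n - k) * qb q n k)
              * x ^ (k + 1)
          = (-1 : ℂ) ^ (k + 1) * q ^ ee (k + 1) * qb q n (k + 1) * x ^ (k + 1)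
            + (-1 : ℂ) ^ (k + 1) * (q ^ ee (k + 1) * q ^ (n - k)) * qb q n k * x ^ (k + 1) := by
            ring
        _ = (-1 : ℂ) ^ (k + 1) * q ^ ee (k + 1) * qb q n (k + 1) * x ^ (k + 1)
            + (-1 : ℂ) ^ (k + 1) * (q ^ ee k * q ^ n) * qb q n k * x ^ (k + 1) := by rw [hpow]
        _ = _ := by rw [hsg]; ring
    rw [hC, Finset.sum_sub_distrib]
    ring

omit hq1 in
lemma poch_one_zero (m : ℕ) (hm : 1 ≤ m) : qPoch q 1 m = 0 := by
  unfold qPoch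
  refine Finset.prod_eq_zero (Finset.mem_range.mpr (by omega : 0 < m)) ?_
  simp

include hq1 in
lemma key (a : ℂ) (N : ℕ) :
    ∑ m ∈ range (N + 1),
        (-1 : ℂ) ^ m * q ^ ee m * qb q N m * qPoch q (a * q ^ (N - m + 1)) m
      = q ^ (N * N) * a ^ N := by
  have step1 : ∑ m ∈ range (N + 1),
      (-1 : ℂ) ^ m * q ^ ee m * qb q N m * qPoch q (a * q ^ (N - m + 1)) m
      = ∑ m ∈ range (N + 1), ∑ j ∈ range (m + 1),
          (-1 : ℂ) ^ m * q ^ ee m * qb q N m *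
            ((-1 : ℂ) ^ j * q ^ ee j * qb q m j * (a * q ^ (N - m + 1)) ^ j) := by
    refine Finset.sum_congr rfl fun m _ => ?_
    rw [gauss hq1 (a * q ^ (N - m + 1)) m, Finset.mul_sum]
  rw [step1]
  have swap : ∑ m ∈ range (N + 1), ∑ j ∈ range (m + 1),
      (-1 : ℂ) ^ m * q ^ ee m * qb q N m *
        ((-1 : ℂ) ^ j * q ^ ee j * qb q m j * (a * q ^ (N - m + 1)) ^ j)
      = ∑ j ∈ range (N + 1), ∑ m ∈ Finset.Ico j (N + 1),
          (-1 : ℂ) ^ m * q ^ ee m * qb q N m *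
            ((-1 : ℂ) ^ j * q ^ ee j * qb q m j * (a * q ^ (N - m + 1)) ^ j) := by
    simp only [Finset.range_eq_Ico]
    rw [← Finset.sum_Ico_Ico_comm 0 (N + 1) (fun i m =>
      (-1 : ℂ) ^ m * q ^ ee m * qb q N m *
        ((-1 : ℂ) ^ i * q ^ ee i * qb q m i * (a * q ^ (N - m + 1)) ^ i))]
  rw [swap]
  have inner : ∀ j ∈ range (N + 1),
      (∑ m ∈ Finset.Ico j (N + 1),
          (-1 : ℂ) ^ m * q ^ ee m * qb q N m *
            ((-1 : ℂ) ^ j * q ^ ee j * qb q m j * (a * q ^ (N - m + 1)) ^ j))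
      = qb q N j * a ^ j * q ^ (j * N) * qPoch q 1 (N - j) := by
    intro j hj
    have hjN : j ≤ N := by have := Finset.mem_range.mp hj; omega
    rw [Finset.sum_Ico_eq_sum_range]
    have hlen : N + 1 - j = (N - j) + 1 := by omega
    rw [hlen]
    rw [gauss hq1 (1 : ℂ) (N - j), Finset.mul_sum]
    refine Finset.sum_congr rfl fun r hr => ?_
    have hrNj : r ≤ N - j := by have := Finset.mem_range.mp hr; omega
    obtain ⟨d, hd⟩ : ∃ d, N = j + r + d := ⟨N - j - r, by omega⟩
    subst hd
    have e1 : j + r + d - (j + r) + 1 = d + 1 := by omega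
    have e2 : j + r + d - j = r + d := by omega
    rw [e1, e2]
    have hqb := qb_tri hq1 (Nat.le_add_right j r) (by omega : j + r ≤ j + r + d)
    rw [e2, (by omega : j + r - j = r)] at hqb
    have hsign : (-1 : ℂ) ^ (j + r) * (-1 : ℂ) ^ j = (-1 : ℂ) ^ r := by
      rw [← pow_add, (by ring : j + r + j = r + 2 * j), pow_add, pow_mul]
      norm_num
    have hqpow : q ^ ee (j + r) * q ^ ee j * q ^ ((d + 1) * j)
        = q ^ ee r * q ^ (j * (j + r + d)) := by
      rw [← pow_add, ← pow_add, ← pow_add]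
      congr 1
      calc ee (j + r) + ee j + (d + 1) * j
          = ee r + (2 * ee j + j) + j * r + j * d := by rw [ee_add]; ring
        _ = ee r + j * j + j * r + j * d := by rw [two_ee]
        _ = ee r + j * (j + r + d) := by ring
    calc (-1 : ℂ) ^ (j + r) * q ^ ee (j + r) * qb q (j + r + d) (j + r) *
            ((-1 : ℂ) ^ j * q ^ ee j * qb q (j + r) j * (a * q ^ (d + 1)) ^ j)
        = ((-1 : ℂ) ^ (j + r) * (-1 : ℂ) ^ j) *
            (q ^ ee (j + r) * q ^ ee j * q ^ ((d + 1) * j)) *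
            (qb q (j + r + d) (j + r) * qb q (j + r) j) * a ^ j := by
          rw [mul_pow, ← pow_mul]
          ring
      _ = (-1 : ℂ) ^ r * (q ^ ee r * q ^ (j * (j + r + d))) *
            (qb q (j + r + d) j * qb q (r + d) r) * a ^ j := by
          rw [hsign, hqpow, hqb]
      _ = qb q (j + r + d) j * a ^ j * q ^ (j * (j + r + d)) *
            ((-1 : ℂ) ^ r * q ^ ee r * qb q (r + d) r * 1 ^ r) := by
          ring
  rw [Finset.sum_congr rfl inner]
  rw [Finset.sum_eq_single_of_mem N (Finset.self_mem_range_succ N)]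
  · rw [qb_self hq1, Nat.sub_self, qPoch_zero]
    ring
  · intro j hj hjne
    have : 1 ≤ N - j := by have := Finset.mem_range.mp hj; omega
    rw [poch_one_zero _ this, mul_zero]

omit hq1 in
lemma prod_one_sub_ge (v : ℕ → ℂ) (F : Finset ℕ) (h1 : ∀ j ∈ F, ‖v j‖ ≤ 1) :
    1 - ∑ j ∈ F, ‖v j‖ ≤ ‖∏ j ∈ F, (1 - v j)‖ := by
  classical
  induction F using Finset.cons_induction with
  | empty => simp
  | cons i F hi ih =>
    rw [Finset.prod_cons, Finset.sum_cons]
    have h1i : ‖v i‖ ≤ 1 := h1 i (Finset.mem_cons_self i F)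
    have ihF : 1 - ∑ j ∈ F, ‖v j‖ ≤ ‖∏ j ∈ F, (1 - v j)‖ :=
      ih fun j hj => h1 j (Finset.mem_cons_of_mem hj)
    have hS : (0:ℝ) ≤ ∑ j ∈ F, ‖v j‖ := Finset.sum_nonneg fun j _ => norm_nonneg _
    rcases le_or_gt (1 - (‖v i‖ + ∑ j ∈ F, ‖v j‖)) 0 with h | h
    · exact h.trans (norm_nonneg _)
    · have h2 : 1 - ‖v i‖ ≤ ‖(1 : ℂ) - v i‖ := by
        calc 1 - ‖v i‖ = ‖(1:ℂ)‖ - ‖v i‖ := by simp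
          _ ≤ ‖(1:ℂ) - v i‖ := norm_sub_norm_le _ _
      rw [norm_mul]
      calc 1 - (‖v i‖ + ∑ j ∈ F, ‖v j‖)
          ≤ (1 - ‖v i‖) * (1 - ∑ j ∈ F, ‖v j‖) := by
            nlinarith [mul_nonneg (norm_nonneg (v i)) hS]
        _ ≤ ‖(1:ℂ) - v i‖ * ‖∏ j ∈ F, (1 - v j)‖ := by
            apply mul_le_mul h2 ihF _ (norm_nonneg _)
            nlinarith [norm_nonneg (v i)]

omit hq1 in
lemma prod_lower (u : ℕ → ℂ) (hs : Summable fun j => ‖u j‖)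
    (hne : ∀ j, (1 : ℂ) - u j ≠ 0) :
    ∃ δ : ℝ, 0 < δ ∧ ∀ n, δ ≤ ‖∏ j ∈ Finset.range n, (1 - u j)‖ := by
  classical
  have htail : Tendsto (fun i => ∑' k, ‖u (k + i)‖) atTop (nhds 0) :=
    tendsto_sum_nat_add fun j => ‖u j‖
  have hev : ∀ᶠ i in atTop, ∑' k, ‖u (k + i)‖ < 1/2 :=
    htail.eventually (gt_mem_nhds (by norm_num))
  obtain ⟨J, hJ⟩ := hev.exists
  have htails : ∀ n, ∑ j ∈ Finset.Ico J n, ‖u j‖ ≤ 1/2 := by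
    intro n
    rcases le_or_gt J n with h | h
    · rw [Finset.sum_Ico_eq_sum_range]
      have hsum : Summable fun k => ‖u (k + J)‖ := (summable_nat_add_iff J).mpr hs
      have hle := Summable.sum_le_tsum (Finset.range (n - J)) (fun k _ => norm_nonneg _) hsum
      calc ∑ k ∈ Finset.range (n - J), ‖u (J + k)‖
          = ∑ k ∈ Finset.range (n - J), ‖u (k + J)‖ := by
            refine Finset.sum_congr rfl fun k _ => by rw [Nat.add_comm]
        _ ≤ ∑' k, ‖u (k + J)‖ := hle
        _ ≤ 1/2 := hJ.le
    · rw [Finset.Ico_eq_empty (by omega)]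
      norm_num
  have hsmall : ∀ n, ∀ j ∈ Finset.Ico J n, ‖u j‖ ≤ 1 := by
    intro n j hj
    have := Finset.single_le_sum (f := fun j => ‖u j‖) (fun i _ => norm_nonneg _) hj
    linarith [htails n]
  have hpos : ∀ n, 0 < ‖∏ j ∈ Finset.range n, (1 - u j)‖ := by
    intro n
    rw [norm_pos_iff, Finset.prod_ne_zero_iff]
    exact fun j _ => hne j
  set c : ℝ := (Finset.range (J + 1)).inf' (by simp)
      (fun n => ‖∏ j ∈ Finset.range n, (1 - u j)‖) with hc
  have hcpos : 0 < c := by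
    rw [hc, Finset.lt_inf'_iff]
    exact fun n _ => hpos n
  refine ⟨c * (1/2), by positivity, fun n => ?_⟩
  rcases le_or_gt n J with h | h
  · have hmem : n ∈ Finset.range (J + 1) := Finset.mem_range.mpr (by omega)
    have := Finset.inf'_le (fun n => ‖∏ j ∈ Finset.range n, (1 - u j)‖) hmem
    nlinarith [hpos n]
  · have hsplit : ∏ j ∈ Finset.range n, (1 - u j)
        = (∏ j ∈ Finset.range J, (1 - u j)) * ∏ j ∈ Finset.Ico J n, (1 - u j) := by
      rw [← Finset.prod_range_mul_prod_Ico _ (by omega : J ≤ n)]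
    rw [hsplit, norm_mul]
    have h1 : c ≤ ‖∏ j ∈ Finset.range J, (1 - u j)‖ :=
      Finset.inf'_le _ (Finset.mem_range.mpr (by omega))
    have h2 : 1/2 ≤ ‖∏ j ∈ Finset.Ico J n, (1 - u j)‖ := by
      have := prod_one_sub_ge u (Finset.Ico J n) (hsmall n)
      linarith [htails n]
    exact mul_le_mul h1 h2 (by norm_num) (norm_nonneg _)

omit hq1 in
lemma prod_upper (u : ℕ → ℂ) (C : ℝ) (hC : ∀ n, ∑ j ∈ Finset.range n, ‖u j‖ ≤ C) (n : ℕ) :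
    ‖∏ j ∈ Finset.range n, (1 - u j)‖ ≤ Real.exp C := by
  rw [norm_prod]
  calc ∏ j ∈ Finset.range n, ‖(1:ℂ) - u j‖
      ≤ ∏ j ∈ Finset.range n, Real.exp ‖u j‖ := by
        refine Finset.prod_le_prod (fun j _ => norm_nonneg _) (fun j _ => ?_)
        calc ‖(1:ℂ) - u j‖ ≤ ‖(1:ℂ)‖ + ‖u j‖ := norm_sub_le _ _
          _ = ‖u j‖ + 1 := by rw [norm_one]; ring
          _ ≤ Real.exp ‖u j‖ := Real.add_one_le_exp _
    _ = Real.exp (∑ j ∈ Finset.range n, ‖u j‖) := (Real.exp_sum _ _).symm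
    _ ≤ Real.exp C := Real.exp_le_exp.mpr (hC n)

omit hq1 in
lemma mult_aux (w c : ℂ) (hw : ‖w‖ < 1) (hc : ‖c‖ < 1) :
    Multipliable fun j : ℕ => 1 - w * c ^ j := by
  have hlt : ∀ j : ℕ, ‖w * c ^ j‖ < 1 := by
    intro j
    rw [norm_mul, norm_pow]
    calc ‖w‖ * ‖c‖ ^ j ≤ ‖w‖ * 1 :=
        mul_le_mul_of_nonneg_left (pow_le_one₀ (norm_nonneg c) hc.le) (norm_nonneg w)
      _ < 1 := by simpa using hw
  have hne : ∀ j : ℕ, (1 : ℂ) - w * c ^ j ≠ 0 := by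
    intro j
    apply one_sub_ne
    exact hlt j
  refine Complex.multipliable_of_summable_log (f := fun j => 1 - w * c ^ j) ?_
  have h0 : Tendsto (fun n : ℕ => ‖c‖ ^ n) atTop (nhds 0) :=
    tendsto_pow_atTop_nhds_zero_of_lt_one (norm_nonneg c) hc
  have hev : ∀ᶠ n in atTop, ‖c‖ ^ n < 1 / (2 * (‖w‖ + 1)) :=
    h0.eventually (gt_mem_nhds (by positivity))
  obtain ⟨J, hJ'⟩ := hev.exists
  have hJ : ‖w‖ * ‖c‖ ^ J ≤ 1/2 := by
    have h3 : ‖c‖ ^ J * (2 * (‖w‖ + 1)) < 1 := (lt_div_iff₀ (by positivity)).mp hJ'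
    nlinarith [norm_nonneg w, pow_nonneg (norm_nonneg c) J,
      mul_nonneg (norm_nonneg w) (pow_nonneg (norm_nonneg c) J)]
  rw [← summable_nat_add_iff J]
  refine Summable.of_norm_bounded (g := fun j => (3/2) * ((1/2) * ‖c‖ ^ j))
    (((summable_geometric_of_lt_one (norm_nonneg c) hc).mul_left _).mul_left _) fun j => ?_
  have hsmall : ‖w * c ^ (j + J)‖ ≤ (1/2) * ‖c‖ ^ j := by
    rw [norm_mul, norm_pow, pow_add]
    calc ‖w‖ * (‖c‖ ^ j * ‖c‖ ^ J) = (‖w‖ * ‖c‖ ^ J) * ‖c‖ ^ j := by ring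
      _ ≤ (1/2) * ‖c‖ ^ j := mul_le_mul_of_nonneg_right hJ (pow_nonneg (norm_nonneg c) j)
  have hhalf : ‖w * c ^ (j + J)‖ ≤ 1/2 := by
    have : (1/2 : ℝ) * ‖c‖ ^ j ≤ (1/2) * 1 :=
      mul_le_mul_of_nonneg_left (pow_le_one₀ (norm_nonneg c) hc.le) (by norm_num)
    linarith
  have hlog : ‖Complex.log (1 - w * c ^ (j + J))‖ ≤ (3/2) * ‖w * c ^ (j + J)‖ := by
    have := Complex.norm_log_one_add_half_le_self
      (z := -(w * c ^ (j + J))) (by rwa [norm_neg])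
    rwa [← sub_eq_add_neg, norm_neg] at this
  calc ‖Complex.log (1 - w * c ^ (j + J))‖ ≤ (3/2) * ‖w * c ^ (j + J)‖ := hlog
    _ ≤ (3/2) * ((1/2) * ‖c‖ ^ j) := by nlinarith [hsmall]

include hq1 in
lemma euler (z : ℂ) (hz : ‖z‖ < 1) (δ : ℝ) (hδ : 0 < δ)
    (hδle : ∀ n, δ ≤ ‖qPoch q q n‖) :
    qPochInf q z = ∑' k : ℕ, ((-1 : ℂ) ^ k * q ^ ee k / qPoch q q k) * z ^ k := by
  have hq1' : ‖q‖ < 1 := hq1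
  set B : ℝ := Real.exp ((1 - ‖q‖)⁻¹) with hBdef
  have hB : ∀ n, ‖qPoch q q n‖ ≤ B := by
    intro n
    refine prod_upper (fun j => q * q ^ j) ((1 - ‖q‖)⁻¹) (fun m => ?_) n
    calc ∑ j ∈ Finset.range m, ‖q * q ^ j‖
        ≤ ∑ j ∈ Finset.range m, ‖q‖ ^ j := by
          refine Finset.sum_le_sum fun j _ => ?_
          rw [norm_mul, norm_pow]
          exact mul_le_of_le_one_left (pow_nonneg (norm_nonneg q) j) hq1'.le
      _ ≤ ∑' j : ℕ, ‖q‖ ^ j := Summable.sum_le_tsum _ (fun j _ => pow_nonneg (norm_nonneg q) j)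
          (summable_geometric_of_lt_one (norm_nonneg q) hq1')
      _ = (1 - ‖q‖)⁻¹ := tsum_geometric_of_lt_one (norm_nonneg q) hq1'
  have hBpos : 0 < B := Real.exp_pos _
  have hPqt : Tendsto (fun n => qPoch q q n) atTop (nhds (qPochInf q q)) :=
    (mult_aux q q hq1' hq1').hasProd.tendsto_prod_nat
  have hLne : qPochInf q q ≠ 0 := by
    have h1 : Tendsto (fun n => ‖qPoch q q n‖) atTop (nhds ‖qPochInf q q‖) := hPqt.norm
    have h2 : δ ≤ ‖qPochInf q q‖ := ge_of_tendsto' h1 hδle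
    intro h0
    rw [h0, norm_zero] at h2
    linarith
  have hm1 : ∀ k : ℕ, ‖(-1 : ℂ) ^ k‖ = 1 := by
    intro k
    rw [norm_pow, norm_neg, norm_one, one_pow]
  set g : ℕ → ℕ → ℂ :=
    fun n k => if k ≤ n then (-1 : ℂ) ^ k * q ^ ee k * qb q n k * z ^ k else 0 with hg
  have hgsum : ∀ n, qPoch q z n = ∑' k, g n k := by
    intro n
    rw [tsum_eq_sum (s := Finset.range (n + 1)) (fun k hk => by
      simp only [hg]
      exact if_neg (fun hkn => hk (Finset.mem_range.mpr (by omega))))]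
    rw [gauss hq1 z n]
    refine Finset.sum_congr rfl fun k hk => ?_
    have hkn : k ≤ n := by have := Finset.mem_range.mp hk; omega
    simp only [hg, if_pos hkn]
  have hab : ∀ k : ℕ, Tendsto (fun n => g n k) atTop
      (nhds (((-1 : ℂ) ^ k * q ^ ee k / qPoch q q k) * z ^ k)) := by
    intro k
    have t2 : Tendsto (fun n => qPoch q q (n - k)) atTop (nhds (qPochInf q q)) :=
      hPqt.comp (tendsto_sub_atTop_nat k)
    have hden : qPoch q q k * qPochInf q q ≠ 0 := mul_ne_zero (Pq_ne hq1 k) hLne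
    have t3 : Tendsto (fun n => (-1 : ℂ) ^ k * q ^ ee k *
        (qPoch q q n / (qPoch q q k * qPoch q q (n - k))) * z ^ k) atTop
        (nhds ((-1 : ℂ) ^ k * q ^ ee k *
          (qPochInf q q / (qPoch q q k * qPochInf q q)) * z ^ k)) :=
      ((hPqt.div (tendsto_const_nhds.mul t2) hden).const_mul _).mul_const _
    have heq : (-1 : ℂ) ^ k * q ^ ee k *
        (qPochInf q q / (qPoch q q k * qPochInf q q)) * z ^ k
        = ((-1 : ℂ) ^ k * q ^ ee k / qPoch q q k) * z ^ k := by
      rw [mul_comm (qPoch q q k) (qPochInf q q), div_mul_eq_div_div, div_self hLne]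
      ring
    rw [heq] at t3
    refine t3.congr' ?_
    filter_upwards [eventually_ge_atTop k] with n hn
    simp only [hg, if_pos hn, qb_of_le hn]
  have h_bound : ∀ n k, ‖g n k‖ ≤ (B / (δ * δ)) * ‖z‖ ^ k := by
    intro n k
    rcases le_or_gt k n with h | h
    · simp only [hg, if_pos h, qb_of_le h]
      calc ‖(-1 : ℂ) ^ k * q ^ ee k *
            (qPoch q q n / (qPoch q q k * qPoch q q (n - k))) * z ^ k‖
          = ‖q ^ ee k‖ * (‖qPoch q q n‖ / (‖qPoch q q k‖ * ‖qPoch q q (n - k)‖)) * ‖z ^ k‖ := by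
            rw [norm_mul, norm_mul, norm_mul, hm1, one_mul, norm_div, norm_mul]
        _ ≤ 1 * (B / (δ * δ)) * ‖z‖ ^ k := by
            have e1 : ‖q‖ ^ ee k ≤ 1 := pow_le_one₀ (norm_nonneg q) hq1'.le
            have e2 : ‖qPoch q q n‖ / (‖qPoch q q k‖ * ‖qPoch q q (n - k)‖) ≤ B / (δ * δ) := by
              apply div_le_div₀ hBpos.le (hB n) (by positivity)
              exact mul_le_mul (hδle k) (hδle (n - k)) hδ.le (norm_nonneg _)
            have e3 : (0:ℝ) ≤ ‖qPoch q q n‖ / (‖qPoch q q k‖ * ‖qPoch q q (n - k)‖) :=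
              div_nonneg (norm_nonneg _) (mul_nonneg (norm_nonneg _) (norm_nonneg _))
            rw [norm_pow, norm_pow]
            refine mul_le_mul (mul_le_mul e1 e2 e3 zero_le_one) le_rfl
              (pow_nonneg (norm_nonneg z) k) (by positivity)
        _ = (B / (δ * δ)) * ‖z‖ ^ k := by ring
    · simp only [hg, if_neg (by omega : ¬ k ≤ n), norm_zero]
      positivity
  have h_sum : Summable (fun k : ℕ => (B / (δ * δ)) * ‖z‖ ^ k) :=
    (summable_geometric_of_lt_one (norm_nonneg z) hz).mul_left _
  have htan : Tendsto (fun n => ∑' k, g n k) atTop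
      (nhds (∑' k, ((-1 : ℂ) ^ k * q ^ ee k / qPoch q q k) * z ^ k)) :=
    tendsto_tsum_of_dominated_convergence h_sum hab (Filter.Eventually.of_forall h_bound)
  have h5 : Tendsto (fun n => ∑' k, g n k) atTop (nhds (qPochInf q z)) := by
    refine Tendsto.congr (fun n => hgsum n) ?_
    exact (mult_aux z q hz hq1').hasProd.tendsto_prod_nat
  exact tendsto_nhds_unique h5 htan
omit hq1 in
lemma Pa_aux_ne (a : ℂ) (ha : ∀ j : ℕ, a * q ^ (j + 1) ≠ 1) (s t : ℕ) :
    qPoch q (a * q ^ (s + 1)) t ≠ 0 := by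
  unfold qPoch
  rw [Finset.prod_ne_zero_iff]
  intro j _
  rw [sub_ne_zero, mul_assoc, ← pow_add, (by omega : s + 1 + j = (s + j) + 1)]
  exact (ha (s + j)).symm

omit hq1 in
lemma Pa_ne (a : ℂ) (ha : ∀ j : ℕ, a * q ^ (j + 1) ≠ 1) (n : ℕ) :
    qPoch q (a * q) n ≠ 0 := by
  have := Pa_aux_ne a ha 0 n
  simpa using this

include hq1 in
lemma coeff (a z : ℂ) (ha : ∀ j : ℕ, a * q ^ (j + 1) ≠ 1) (n : ℕ) :
    ∑ k ∈ range (n + 1),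
        (((-1 : ℂ) ^ k * q ^ ee k / qPoch q q k) * z ^ k) *
          (z ^ (n - k) / (qPoch q (a * q) (n - k) * qPoch q q (n - k)))
      = q ^ (n * n) * a ^ n * z ^ n / (qPoch q (a * q) n * qPoch q q n) := by
  have hterm : ∀ k ∈ range (n + 1),
      (((-1 : ℂ) ^ k * q ^ ee k / qPoch q q k) * z ^ k) *
          (z ^ (n - k) / (qPoch q (a * q) (n - k) * qPoch q q (n - k)))
      = ((-1 : ℂ) ^ k * q ^ ee k * qb q n k * qPoch q (a * q ^ (n - k + 1)) k) *
          (z ^ n / (qPoch q (a * q) n * qPoch q q n)) := by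
    intro k hk
    have hkn : k ≤ n := by have := Finset.mem_range.mp hk; omega
    obtain ⟨d, rfl⟩ : ∃ d, n = k + d := ⟨n - k, by omega⟩
    have e2 : k + d - k = d := by omega
    rw [e2, qb_of_le hkn, e2]
    have harg : a * q * q ^ d = a * q ^ (d + 1) := by rw [pow_succ]; ring
    have hsplit : qPoch q (a * q) (k + d) = qPoch q (a * q) d * qPoch q (a * q ^ (d + 1)) k := by
      rw [(by omega : k + d = d + k), qPoch_split q (a * q) d k, harg]
    rw [hsplit]
    have h1 := Pq_ne hq1 k
    have h2 := Pq_ne hq1 d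
    have h3 := Pq_ne hq1 (k + d)
    have h4 := Pa_ne a ha d
    have h5 := Pa_aux_ne a ha d k
    field_simp
    ring
  rw [Finset.sum_congr rfl hterm, ← Finset.sum_mul, key hq1 a n]
  ring

end Q
end HahnAux

/-- Hahn's relation between Jackson's first and second q-Bessel functions, series form. -/
theorem hahn_relation (q : ℂ) (hq0 : 0 < ‖q‖) (hq1 : ‖q‖ < 1)
    (a : ℂ) (ha : ∀ j : ℕ, a * q ^ (j + 1) ≠ 1) (z : ℂ) (hz : ‖z‖ < 1) :
    ∑' n : ℕ, q ^ (n ^ 2) * a ^ n * z ^ n / (qPoch q (a * q) n * qPoch q q n) =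
      qPochInf q z * ∑' n : ℕ, z ^ n / (qPoch q (a * q) n * qPoch q q n) := by
  classical
  have hq1' : ‖q‖ < 1 := hq1
  have hz' : ‖z‖ < 1 := hz
  have hm1 : ∀ k : ℕ, ‖(-1 : ℂ) ^ k‖ = 1 := fun k => by
    rw [norm_pow, norm_neg, norm_one, one_pow]
  -- lower bounds for the two Pochhammer denominators
  have hsq : Summable (fun j : ℕ => ‖q * q ^ j‖) := by
    refine ((summable_geometric_of_lt_one (norm_nonneg q) hq1').mul_left ‖q‖).congr fun j => ?_
    rw [norm_mul, norm_pow]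
  obtain ⟨δq, hδq, hδqle'⟩ := HahnAux.prod_lower (fun j => q * q ^ j) hsq
    (fun j => HahnAux.fac_ne hq1 j)
  have hδqle : ∀ n, δq ≤ ‖qPoch q q n‖ := fun n => hδqle' n
  have hfa : ∀ j : ℕ, (1 : ℂ) - (a * q) * q ^ j ≠ 0 := by
    intro j
    rw [sub_ne_zero, mul_assoc, ← pow_succ']
    exact (ha j).symm
  have hsa : Summable (fun j : ℕ => ‖(a * q) * q ^ j‖) := by
    refine ((summable_geometric_of_lt_one (norm_nonneg q) hq1').mul_left ‖a * q‖).congr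
      fun j => ?_
    simp [norm_mul, norm_pow]
  obtain ⟨δa, hδa, hδale'⟩ := HahnAux.prod_lower (fun j => (a * q) * q ^ j) hsa hfa
  have hδale : ∀ n, δa ≤ ‖qPoch q (a * q) n‖ := fun n => hδale' n
  -- absolute summability of the two factor series
  have hEnorm : Summable (fun k : ℕ =>
      ‖((-1 : ℂ) ^ k * q ^ HahnAux.ee k / qPoch q q k) * z ^ k‖) := by
    refine Summable.of_nonneg_of_le (fun k => norm_nonneg _) (fun k => ?_)
      ((summable_geometric_of_lt_one (norm_nonneg z) hz').mul_left (1 / δq))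
    rw [norm_mul, norm_div, norm_mul, hm1, one_mul, norm_pow, norm_pow]
    refine mul_le_mul_of_nonneg_right ?_ (pow_nonneg (norm_nonneg z) k)
    exact div_le_div₀ zero_le_one (pow_le_one₀ (norm_nonneg q) hq1'.le) hδq (hδqle k)
  have hFnorm : Summable (fun k : ℕ =>
      ‖z ^ k / (qPoch q (a * q) k * qPoch q q k)‖) := by
    refine Summable.of_nonneg_of_le (fun k => norm_nonneg _) (fun k => ?_)
      ((summable_geometric_of_lt_one (norm_nonneg z) hz').mul_left (1 / (δa * δq)))
    rw [norm_div, norm_mul, norm_pow]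
    calc ‖z‖ ^ k / (‖qPoch q (a * q) k‖ * ‖qPoch q q k‖)
        ≤ ‖z‖ ^ k / (δa * δq) := by
          refine div_le_div₀ (pow_nonneg (norm_nonneg z) k) le_rfl (by positivity) ?_
          exact mul_le_mul (hδale k) (hδqle k) hδq.le (norm_nonneg _)
      _ = (1 / (δa * δq)) * ‖z‖ ^ k := by ring
  have heuler := HahnAux.euler hq1 z hz' δq hδq hδqle
  refine Eq.symm ?_
  calc qPochInf q z * ∑' n : ℕ, z ^ n / (qPoch q (a * q) n * qPoch q q n)
      = (∑' k : ℕ, ((-1 : ℂ) ^ k * q ^ HahnAux.ee k / qPoch q q k) * z ^ k) *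
        ∑' n : ℕ, z ^ n / (qPoch q (a * q) n * qPoch q q n) := by rw [heuler]
    _ = ∑' n : ℕ, ∑ k ∈ Finset.range (n + 1),
          (((-1 : ℂ) ^ k * q ^ HahnAux.ee k / qPoch q q k) * z ^ k) *
            (z ^ (n - k) / (qPoch q (a * q) (n - k) * qPoch q q (n - k))) :=
        tsum_mul_tsum_eq_tsum_sum_range_of_summable_norm hEnorm hFnorm
    _ = ∑' n : ℕ, q ^ (n ^ 2) * a ^ n * z ^ n / (qPoch q (a * q) n * qPoch q q n) := by
        refine tsum_congr fun n => ?_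
        rw [HahnAux.coeff hq1 a z ha n, pow_two n]
end
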